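/- Let c ⊂ ℙ² be a smooth conic with equation q in the plane ⟨c⟩ = {x₃ = x₄ = 0} ⊂ ℙ⁴, and let Q' = x₃m₃ + x₄m₄ be a quadric containing ⟨c⟩. Let κ_c : H⁰(O_c(2)) → H⁰(O_c(2))/⟨m₃|_c, m₄|_c⟩ be the projection (assuming the quotient is 1-dimensional). Then the induced quadratic form on H⁰(O_c(1)) ≅ ℂ² (via the multiplication map Sym²H⁰(O_c(1)) ≅ H⁰(O_c(2))) is nondegenerate if and only if the pencil of sections ⟨m₃|_c, m₄|_c⟩ ⊂ H⁰(O_c(2)) has no base point on c. -/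

import Mathlib

namespace Stmt16

/-- A section of `O_c(2)` on the conic `c ≅ ℙ¹` is a binary quadratic form
`a·s² + b·st + c·t²`, recorded by its coefficient vector `(a,b,c) : Fin 3 → ℂ`. -/
abbrev Sect2 := Fin 3 → ℂ

/-- Evaluation of a binary quadratic form at the point `[s : t] ∈ ℙ¹ ≅ c`. -/
def eval2 (m : Sect2) (s t : ℂ) : ℂ := m 0 * s ^ 2 + m 1 * s * t + m 2 * t ^ 2

private def dot (x y : Fin 3 → ℂ) : ℂ := x 0 * y 0 + x 1 * y 1 + x 2 * y 2

private def cp (x y : Fin 3 → ℂ) : Fin 3 → ℂ :=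
  ![x 1 * y 2 - x 2 * y 1, x 2 * y 0 - x 0 * y 2, x 0 * y 1 - x 1 * y 0]

private lemma grassmann (w x y : Fin 3 → ℂ) :
    cp w (cp x y) = dot w y • x - dot w x • y := by
  funext i; fin_cases i <;> simp [cp, dot] <;> ring

private lemma parallel {x n : Fin 3 → ℂ} (h : cp x n = 0) (hn : n ≠ 0) :
    ∃ μ : ℂ, x = μ • n := by
  have h0 := congrFun h 0
  have h1 := congrFun h 1
  have h2 := congrFun h 2
  simp [cp] at h0 h1 h2
  have hex : ∃ i, n i ≠ 0 := by
    by_contra hc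
    push_neg at hc
    exact hn (funext hc)
  obtain ⟨i, hi⟩ := hex
  fin_cases i
  · have hn0 : n 0 ≠ 0 := hi
    refine ⟨x 0 / n 0, ?_⟩
    funext j; fin_cases j
    · simp; field_simp
    · show x 1 = x 0 / n 0 * n 1
      field_simp
      linear_combination -h2
    · show x 2 = x 0 / n 0 * n 2
      field_simp
      linear_combination h1
  · have hn1 : n 1 ≠ 0 := hi
    refine ⟨x 1 / n 1, ?_⟩
    funext j; fin_cases j
    · show x 0 = x 1 / n 1 * n 0
      field_simp
      linear_combination h2
    · simp; field_simp
    · show x 2 = x 1 / n 1 * n 2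
      field_simp
      linear_combination -h0
  · have hn2 : n 2 ≠ 0 := hi
    refine ⟨x 2 / n 2, ?_⟩
    funext j; fin_cases j
    · show x 0 = x 2 / n 2 * n 0
      field_simp
      linear_combination -h1
    · show x 1 = x 2 / n 2 * n 1
      field_simp
      linear_combination h0
    · simp; field_simp

private lemma cp_eq_zero {P E m3 m4 : Fin 3 → ℂ} (hind : LinearIndependent ℂ ![m3, m4])
    (h1 : dot m3 P = 0) (h2 : dot m4 P = 0) (h3 : dot m3 E = 0) (h4 : dot m4 E = 0) :
    cp P E = 0 := by
  by_contra hn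
  have hg3 : cp m3 (cp P E) = 0 := by
    rw [grassmann, h1, h3]; simp
  have hg4 : cp m4 (cp P E) = 0 := by
    rw [grassmann, h2, h4]; simp
  obtain ⟨μ, hμ⟩ := parallel hg3 hn
  obtain ⟨ν, hν⟩ := parallel hg4 hn
  rw [LinearIndependent.pair_iff] at hind
  have h0 : ν • m3 + (-μ) • m4 = 0 := by
    rw [hμ, hν, smul_smul, smul_smul]
    rw [← add_smul]; ring_nf; simp
  obtain ⟨hν0, hμ0⟩ := hind ν (-μ) h0
  have hm30 : m3 = 0 := by
    rw [hμ, neg_eq_zero.mp hμ0, zero_smul]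
  have := hind 1 0 (by rw [hm30]; simp)
  exact one_ne_zero this.1

theorem kappa_nondegenerate_iff_basepoint_free
    (m3 m4 : Sect2) (hind : LinearIndependent ℂ ![m3, m4])
    (φ : (Fin 3 → ℂ) →ₗ[ℂ] ℂ) (hφ : φ ≠ 0) (h3 : φ m3 = 0) (h4 : φ m4 = 0) :
    ((∀ u v : ℂ, (∀ u' v' : ℂ, φ ![u * u', u * v' + u' * v, v * v'] = 0) →
        u = 0 ∧ v = 0) ↔
      ¬∃ s t : ℂ, ¬(s = 0 ∧ t = 0) ∧ eval2 m3 s t = 0 ∧ eval2 m4 s t = 0) := by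
  set a := φ ![1,0,0] with ha
  set b := φ ![0,1,0] with hb
  set c := φ ![0,0,1] with hc
  have hexp : ∀ v : Fin 3 → ℂ, φ v = a * v 0 + b * v 1 + c * v 2 := by
    intro v
    have hv : φ v = φ (v 0 • ![1,0,0] + v 1 • ![(0:ℂ),1,0] + v 2 • ![(0:ℂ),0,1]) := by
      congr 1; funext i; fin_cases i <;> simp
    rw [hv, map_add, map_add, map_smul, map_smul, map_smul]
    simp only [smul_eq_mul]
    ring
  have habc : ¬(a = 0 ∧ b = 0 ∧ c = 0) := by
    rintro ⟨ha0, hb0, hc0⟩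
    apply hφ
    apply LinearMap.ext
    intro v
    rw [hexp v, ha0, hb0, hc0]; simp
  have hm3 : a * m3 0 + b * m3 1 + c * m3 2 = 0 := by rw [← hexp]; exact h3
  have hm4 : a * m4 0 + b * m4 1 + c * m4 2 = 0 := by rw [← hexp]; exact h4
  have step1 : (∀ u v : ℂ, (∀ u' v' : ℂ, φ ![u * u', u * v' + u' * v, v * v'] = 0) →
        u = 0 ∧ v = 0) ↔ a * c - b ^ 2 ≠ 0 := by
    constructor
    · intro hL
      by_contra hD
      by_cases hab : a = 0 ∧ b = 0
      · have := hL 1 0 (fun u' v' => by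
          rw [hexp]; simp [hab.1, hab.2])
        exact one_ne_zero this.1
      · have := hL (-b) a (fun u' v' => by
          rw [hexp]; simp only [Matrix.cons_val_zero, Matrix.cons_val_one, Matrix.head_cons,
            Matrix.cons_val_two, Matrix.tail_cons]
          linear_combination v' * hD)
        exact hab ⟨this.2, neg_eq_zero.mp this.1⟩
    · intro hD u v h
      have e1 := h 1 0
      have e2 := h 0 1
      rw [hexp] at e1 e2
      simp only [Matrix.cons_val_zero, Matrix.cons_val_one, Matrix.head_cons,
        Matrix.cons_val_two, Matrix.tail_cons] at e1 e2
      constructor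
      · have hu : (a * c - b ^ 2) * u = 0 := by linear_combination c * e1 - b * e2
        exact (mul_eq_zero.mp hu).resolve_left hD
      · have hv : (a * c - b ^ 2) * v = 0 := by linear_combination a * e2 - b * e1
        exact (mul_eq_zero.mp hv).resolve_left hD
  have step2 : (∃ s t : ℂ, ¬(s = 0 ∧ t = 0) ∧ eval2 m3 s t = 0 ∧ eval2 m4 s t = 0) ↔
      a * c - b ^ 2 = 0 := by
    constructor
    · rintro ⟨s, t, hst, he3, he4⟩
      unfold eval2 at he3 he4
      have hcp : cp ![a, b, c] ![s ^ 2, s * t, t ^ 2] = 0 := by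
        apply cp_eq_zero (m3 := m3) (m4 := m4) hind
        · simp [dot]; linear_combination hm3
        · simp [dot]; linear_combination hm4
        · simp [dot]; linear_combination he3
        · simp [dot]; linear_combination he4
      have c0 := congrFun hcp 0
      have c1 := congrFun hcp 1
      have c2 := congrFun hcp 2
      simp [cp] at c0 c1 c2
      push_neg at hst
      by_cases hs0 : s = 0
      · have ht0 : t ≠ 0 := hst hs0
        have key : (a * c - b ^ 2) * t ^ 4 = 0 := by
          linear_combination (-(c * t ^ 2)) * c1 - (b * t ^ 2 + c * s * t) * c0
        rcases mul_eq_zero.mp key with h | h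
        · exact h
        · exact absurd (pow_eq_zero_iff (by norm_num) |>.mp h) ht0
      · have key : (a * c - b ^ 2) * s ^ 4 = 0 := by
          linear_combination (a * s ^ 2) * c1 + (a * s * t + b * s ^ 2) * c2
        rcases mul_eq_zero.mp key with h | h
        · exact h
        · exact absurd (pow_eq_zero_iff (by norm_num) |>.mp h) hs0
    · intro hD
      by_cases ha0 : a = 0
      · have hb0 : b = 0 := by
          have : b ^ 2 = 0 := by linear_combination c * ha0 - hD
          exact pow_eq_zero_iff (by norm_num) |>.mp this
        have hc0 : c ≠ 0 := fun hc0 => habc ⟨ha0, hb0, hc0⟩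
        obtain ⟨t, ht⟩ := IsAlgClosed.exists_pow_nat_eq c (n := 2) (by norm_num)
        refine ⟨0, t, ?_, ?_, ?_⟩
        · rintro ⟨-, ht0⟩; rw [ht0] at ht; simp at ht; exact hc0 ht.symm
        · show eval2 m3 0 t = 0
          unfold eval2
          linear_combination m3 2 * ht + hm3 - m3 0 * ha0 - m3 1 * hb0
        · show eval2 m4 0 t = 0
          unfold eval2
          linear_combination m4 2 * ht + hm4 - m4 0 * ha0 - m4 1 * hb0
      · obtain ⟨s, hs⟩ := IsAlgClosed.exists_pow_nat_eq a (n := 2) (by norm_num)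
        have hs0 : s ≠ 0 := fun h => ha0 (by rw [← hs, h]; ring)
        have hstb : s * (b / s) = b := by field_simp
        have hbt : (b / s) ^ 2 = c := by
          have h2 : b ^ 2 = c * s ^ 2 := by linear_combination -hD - c * hs
          field_simp [h2]
          linear_combination h2
        refine ⟨s, b / s, ?_, ?_, ?_⟩
        · rintro ⟨hs', -⟩; exact hs0 hs'
        · show eval2 m3 s (b / s) = 0
          unfold eval2
          linear_combination m3 0 * hs + m3 1 * hstb + m3 2 * hbt + hm3
        · show eval2 m4 s (b / s) = 0
          unfold eval2
          linear_combination m4 0 * hs + m4 1 * hstb + m4 2 * hbt + hm4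
  rw [step1]
  exact (not_iff_not.mpr step2).symm
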